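/- There is no Green's function of the punctured unit disk $\mathbb{D} \setminus \{0\}$ with pole at $w = 1/2$; that is, there exists no function $g : \mathbb{C} \to \mathbb{R}$ such that $g$ is continuous on $\mathbb{C} \setminus \{1/2\}$, $g = 0$ on $\mathbb{C} \setminus (\mathbb{D} \setminus \{0\})$, $g$ is harmonic on $(\mathbb{D} \setminus \{0\}) \setminus \{1/2\}$, and $z \mapsto g(z) + \log|z - 1/2|$ is bounded on some punctured neighborhood of $1/2$. (In other words, the punctured disk is not a regular domain.) -/

import Mathlib

open Metric Filter

/-- 1-D second derivative test at a local max. -/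
lemma second_deriv_nonpos_of_isLocalMax {φ φ' : ℝ → ℝ} {L : ℝ}
    (hmax : IsLocalMax φ 0)
    (hd : ∀ᶠ t in nhds (0:ℝ), HasDerivAt φ (φ' t) t)
    (hd2 : HasDerivAt φ' L 0) : L ≤ 0 := by
  by_contra hL
  push_neg at hL
  have hφ'0 : φ' 0 = 0 := hmax.hasDerivAt_eq_zero (hd.self_of_nhds)
  -- slope of φ' at 0 tends to L > 0, so φ' t > 0 for small t > 0
  have hslope := hasDerivAt_iff_tendsto_slope.1 hd2
  have hpos : ∀ᶠ t in nhdsWithin (0:ℝ) {(0:ℝ)}ᶜ, 0 < slope φ' 0 t :=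
    hslope.eventually (eventually_gt_nhds hL)
  rw [eventually_nhdsWithin_iff] at hpos
  obtain ⟨δ₁, hδ₁pos, h1⟩ := Metric.eventually_nhds_iff.1 (hpos.and (hd.and hmax))
  set δ := δ₁ / 2 with hδ
  have hδpos : 0 < δ := by positivity
  have hmem : ∀ t ∈ Set.Icc (0:ℝ) δ, dist t (0:ℝ) < δ₁ := by
    intro t ht
    rw [Real.dist_eq, sub_zero, abs_of_nonneg ht.1]
    have := ht.2; simp only [hδ] at this ⊢; linarith
  have hmono : StrictMonoOn φ (Set.Icc (0:ℝ) δ) := by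
    apply strictMonoOn_of_deriv_pos (convex_Icc _ _)
    · intro t ht
      exact ((h1 (hmem t ht)).2.1).continuousAt.continuousWithinAt
    · intro t ht
      rw [interior_Icc] at ht
      have hd1 := (h1 (hmem t (Set.mem_Icc.2 ⟨le_of_lt ht.1, le_of_lt ht.2⟩)))
      have hφ't : 0 < φ' t := by
        have hs := hd1.1 (by simpa using ne_of_gt ht.1)
        rw [slope_def_field] at hs
        have : φ' t / t > 0 := by simpa [hφ'0] using hs
        have := mul_pos this ht.1
        rwa [div_mul_cancel₀] at this
        exact ne_of_gt ht.1
      rw [hd1.2.1.deriv]; exact hφ't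
  have h2 : φ δ ≤ φ 0 := ((h1 (by rw [Real.dist_eq, sub_zero, abs_of_pos hδpos]; simpa [hδ] using hδ₁pos.le |> fun _ => by linarith)).2.2 : φ δ ≤ φ 0)
  have h3 : φ 0 < φ δ := hmono (Set.left_mem_Icc.2 hδpos.le) (Set.right_mem_Icc.2 hδpos.le) hδpos
  linarith

/-- At an interior local max of a `C²` function, every second directional derivative is `≤ 0`. -/
lemma secondDirDeriv_nonpos {U : Set ℂ} (hU : IsOpen U) {f : ℂ → ℝ}
    (hf : ContDiffOn ℝ 2 f U) {x : ℂ} (hx : x ∈ U) (hmax : IsLocalMax f x) (v : ℂ) :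
    fderiv ℝ (fun y => fderiv ℝ f y v) x v ≤ 0 := by
  set ℓ : ℝ → ℂ := fun t => x + t • v with hℓ
  have hℓ0 : ℓ 0 = x := by simp [hℓ]
  have hℓd : ∀ t : ℝ, HasDerivAt ℓ v t := by
    intro t
    simpa only [id, one_smul] using ((hasDerivAt_id t).smul_const v).const_add x
  have hℓc : Continuous ℓ := by continuity
  -- F1 is C¹ near x
  have hfx : ContDiffAt ℝ 2 f x := hf.contDiffAt (hU.mem_nhds hx)
  have hF : ContDiffAt ℝ 1 (fderiv ℝ f) x := hfx.fderiv_right (by norm_num)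
  set F1 : ℂ → ℝ := fun y => fderiv ℝ f y v with hF1def
  have hF1 : ContDiffAt ℝ 1 F1 x := by
    exact (ContinuousLinearMap.apply ℝ ℝ v).contDiff.contDiffAt.comp x hF
  have hF1d : DifferentiableAt ℝ F1 x := hF1.differentiableAt (by norm_num)
  -- φ and its derivative
  set φ : ℝ → ℝ := fun t => f (ℓ t) with hφdef
  set φ' : ℝ → ℝ := fun t => F1 (ℓ t) with hφ'def
  have hULd : ∀ᶠ t in nhds (0:ℝ), ℓ t ∈ U := by
    have : Filter.Tendsto ℓ (nhds 0) (nhds x) := by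
      rw [← hℓ0]; exact hℓc.continuousAt
    exact this.eventually (hU.eventually_mem hx)
  have hd : ∀ᶠ t in nhds (0:ℝ), HasDerivAt φ (φ' t) t := by
    filter_upwards [hULd] with t ht
    have hdf : DifferentiableAt ℝ f (ℓ t) :=
      (hf.contDiffAt (hU.mem_nhds ht)).differentiableAt (by norm_num)
    exact (hdf.hasFDerivAt.comp_hasDerivAt t (hℓd t))
  have hd2 : HasDerivAt φ' (fderiv ℝ F1 x v) 0 := by
    have h' : HasFDerivAt F1 (fderiv ℝ F1 x) (ℓ 0) := by rw [hℓ0]; exact hF1d.hasFDerivAt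
    exact h'.comp_hasDerivAt 0 (hℓd 0)
  have hmaxφ : IsLocalMax φ 0 := by
    have ht : Filter.Tendsto ℓ (nhds 0) (nhds (ℓ 0)) := hℓc.continuousAt
    have hmax' : IsLocalMax f (ℓ 0) := by rwa [hℓ0]
    exact IsMaxFilter.comp_tendsto hmax' hℓc.continuousAt
  have := second_deriv_nonpos_of_isLocalMax hmaxφ hd hd2
  -- identify fderiv F1 x v with the goal
  exact this

noncomputable def qfun : ℂ → ℝ := fun w => w.re ^ 2 + w.im ^ 2

lemma qfun_contDiff : ContDiff ℝ 2 qfun := by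
  apply ContDiff.add
  · exact (Complex.reCLM.contDiff.pow 2)
  · exact (Complex.imCLM.contDiff.pow 2)

lemma qfun_hasFDerivAt (y : ℂ) :
    HasFDerivAt qfun ((2 * y.re) • Complex.reCLM + (2 * y.im) • Complex.imCLM) y := by
  have h1 : HasFDerivAt (fun w : ℂ => w.re ^ 2)
      ((2 * y.re) • Complex.reCLM) y := by
    have := (Complex.reCLM.hasFDerivAt (x := y)).mul (Complex.reCLM.hasFDerivAt (x := y))
    simpa [pow_two, two_mul, add_smul] using (show HasFDerivAt (fun w : ℂ => w.re * w.re) _ y from this)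
  have h2 : HasFDerivAt (fun w : ℂ => w.im ^ 2)
      ((2 * y.im) • Complex.imCLM) y := by
    have := (Complex.imCLM.hasFDerivAt (x := y)).mul (Complex.imCLM.hasFDerivAt (x := y))
    simpa [pow_two, two_mul, add_smul] using (show HasFDerivAt (fun w : ℂ => w.im * w.im) _ y from this)
  exact h1.add h2

lemma qfun_fderiv_apply (y v : ℂ) :
    fderiv ℝ qfun y v = 2 * y.re * v.re + 2 * y.im * v.im := by
  rw [(qfun_hasFDerivAt y).fderiv]
  simp [mul_assoc]

lemma qfun_second (x v : ℂ) :
    fderiv ℝ (fun y => fderiv ℝ qfun y v) x v = 2 * (v.re ^ 2 + v.im ^ 2) := by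
  have heq : (fun y : ℂ => fderiv ℝ qfun y v)
      = fun y : ℂ => 2 * y.re * v.re + 2 * y.im * v.im := by
    funext y; exact qfun_fderiv_apply y v
  rw [heq]
  have h : HasFDerivAt (fun y : ℂ => 2 * y.re * v.re + 2 * y.im * v.im)
      ((2 * v.re) • Complex.reCLM + (2 * v.im) • Complex.imCLM) x := by
    have h1 : HasFDerivAt (fun y : ℂ => 2 * y.re * v.re) ((2 * v.re) • Complex.reCLM) x := by
      have e : (fun y : ℂ => 2 * y.re * v.re) = fun y : ℂ => (2 * v.re) * Complex.reCLM y := by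
        funext y; simp; ring
      rw [e]; exact (Complex.reCLM.hasFDerivAt (x := x)).const_mul (2 * v.re)
    have h2 : HasFDerivAt (fun y : ℂ => 2 * y.im * v.im) ((2 * v.im) • Complex.imCLM) x := by
      have e : (fun y : ℂ => 2 * y.im * v.im) = fun y : ℂ => (2 * v.im) * Complex.imCLM y := by
        funext y; simp; ring
      rw [e]; exact (Complex.imCLM.hasFDerivAt (x := x)).const_mul (2 * v.im)
    exact h1.add h2
  rw [h.fderiv]
  simp [pow_two]; ring

lemma fderiv_apply_differentiableAt {U : Set ℂ} (hU : IsOpen U) {f : ℂ → ℝ}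
    (hf : ContDiffOn ℝ 2 f U) {x : ℂ} (hx : x ∈ U) (v : ℂ) :
    DifferentiableAt ℝ (fun y => fderiv ℝ f y v) x := by
  have hfx : ContDiffAt ℝ 2 f x := hf.contDiffAt (hU.mem_nhds hx)
  have hF : ContDiffAt ℝ 1 (fderiv ℝ f) x := hfx.fderiv_right (by norm_num)
  exact ((ContinuousLinearMap.apply ℝ ℝ v).contDiff.contDiffAt.comp x hF).differentiableAt
    (by norm_num)

lemma qfun_fderiv_apply_hasFDerivAt (x v : ℂ) :
    HasFDerivAt (fun y : ℂ => fderiv ℝ qfun y v)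
      ((2 * v.re) • Complex.reCLM + (2 * v.im) • Complex.imCLM) x := by
  have heq : (fun y : ℂ => fderiv ℝ qfun y v)
      = fun y : ℂ => 2 * y.re * v.re + 2 * y.im * v.im := by
    funext y; exact qfun_fderiv_apply y v
  rw [heq]
  have h1 : HasFDerivAt (fun y : ℂ => 2 * y.re * v.re) ((2 * v.re) • Complex.reCLM) x := by
    have e : (fun y : ℂ => 2 * y.re * v.re) = fun y : ℂ => (2 * v.re) * Complex.reCLM y := by
      funext y; simp; ring
    rw [e]; exact (Complex.reCLM.hasFDerivAt (x := x)).const_mul (2 * v.re)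
  have h2 : HasFDerivAt (fun y : ℂ => 2 * y.im * v.im) ((2 * v.im) • Complex.imCLM) x := by
    have e : (fun y : ℂ => 2 * y.im * v.im) = fun y : ℂ => (2 * v.im) * Complex.imCLM y := by
      funext y; simp; ring
    rw [e]; exact (Complex.imCLM.hasFDerivAt (x := x)).const_mul (2 * v.im)
  exact h1.add h2

/-- Maximum principle for `C²` functions with vanishing Laplacian. -/
lemma max_principle {U : Set ℂ} (hU : IsOpen U) (hb : Bornology.IsBounded U) {h : ℂ → ℝ}
    (hh2 : ContDiffOn ℝ 2 h U)
    (hlap : ∀ z ∈ U, fderiv ℝ (fun y => fderiv ℝ h y 1) z 1 +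
      fderiv ℝ (fun y => fderiv ℝ h y Complex.I) z Complex.I = 0)
    (hc : ContinuousOn h (closure U)) (hfr : ∀ z ∈ frontier U, h z ≤ 0) :
    ∀ z ∈ U, h z ≤ 0 := by
  intro z hz
  obtain ⟨R, hR⟩ := (hb.closure).subset_closedBall 0
  have hR0 : 0 ≤ R := by
    have := hR (subset_closure hz)
    have := mem_closedBall.1 this
    exact le_trans dist_nonneg this
  -- it suffices to prove h z ≤ δ * R^2 for all δ > 0
  have key : ∀ δ : ℝ, 0 < δ → h z ≤ δ * R ^ 2 := by
    intro δ hδ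
    set u : ℂ → ℝ := fun w => h w + δ * qfun w with hu
    have hucont : ContinuousOn u (closure U) :=
      hc.add ((continuous_const.mul qfun_contDiff.continuous).continuousOn)
    have hK : IsCompact (closure U) :=
      Metric.isCompact_of_isClosed_isBounded isClosed_closure hb.closure
    obtain ⟨x, hxK, hmax⟩ := hK.exists_isMaxOn ⟨z, subset_closure hz⟩ hucont
    by_cases hxU : x ∈ U
    · -- interior max: contradiction with Laplacian
      exfalso
      have hu2 : ContDiffOn ℝ 2 u U :=
        hh2.add ((contDiff_const.mul qfun_contDiff).contDiffOn)
      have hlocmax : IsLocalMax u x :=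
        hmax.isLocalMax (Filter.mem_of_superset (hU.mem_nhds hxU) subset_closure)
      have S1 := secondDirDeriv_nonpos hU hu2 hxU hlocmax 1
      have S2 := secondDirDeriv_nonpos hU hu2 hxU hlocmax Complex.I
      -- decompose the second derivative of u
      have decomp : ∀ v : ℂ, fderiv ℝ (fun y => fderiv ℝ u y v) x v =
          fderiv ℝ (fun y => fderiv ℝ h y v) x v + δ * (2 * (v.re ^ 2 + v.im ^ 2)) := by
        intro v
        have e1 : (fun y => fderiv ℝ u y v)
            =ᶠ[nhds x] (fun y => fderiv ℝ h y v + δ * fderiv ℝ qfun y v) := by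
          filter_upwards [hU.mem_nhds hxU] with y hy
          have d1 : DifferentiableAt ℝ h y :=
            (hh2.contDiffAt (hU.mem_nhds hy)).differentiableAt (by norm_num)
          have dq : DifferentiableAt ℝ qfun y :=
            (qfun_contDiff.differentiable (by norm_num)).differentiableAt
          have d2 : DifferentiableAt ℝ (fun w => δ * qfun w) y := dq.const_mul δ
          have : fderiv ℝ u y = fderiv ℝ h y + fderiv ℝ (fun w => δ * qfun w) y :=
            fderiv_fun_add d1 d2
          rw [this]
          simp [fderiv_const_mul dq δ]
        rw [e1.fderiv_eq]
        have d3 : DifferentiableAt ℝ (fun y => fderiv ℝ h y v) x :=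
          fderiv_apply_differentiableAt hU hh2 hxU v
        have d4 : DifferentiableAt ℝ (fun y : ℂ => fderiv ℝ qfun y v) x :=
          (qfun_fderiv_apply_hasFDerivAt x v).differentiableAt
        rw [fderiv_fun_add d3 (d4.const_mul δ)]
        simp only [ContinuousLinearMap.add_apply]
        congr 1
        rw [fderiv_const_mul d4 δ]
        simp [qfun_second x v]
      have e1 := decomp 1
      have e2 := decomp Complex.I
      have hl := hlap x hxU
      simp only [Complex.one_re, Complex.one_im, Complex.I_re, Complex.I_im] at e1 e2
      norm_num at e1 e2
      linarith
    · -- boundary max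
      have hxfr : x ∈ frontier U := by
        rw [frontier_eq_closure_inter_closure, hU.isClosed_compl.closure_eq]
        exact ⟨hxK, hxU⟩
      have h1 : u z ≤ u x := hmax (subset_closure hz)
      have h2 : h x ≤ 0 := hfr x hxfr
      have hqx : qfun x ≤ R ^ 2 := by
        have hx' := mem_closedBall.1 (hR hxK)
        simp only [dist_zero_right] at hx'
        have : qfun x = ‖x‖ ^ 2 := by
          rw [Complex.sq_norm, Complex.normSq_apply]
          simp [qfun, pow_two]
        rw [this]
        have : ‖x‖ ≤ R := hx'
        nlinarith [norm_nonneg x]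
      have hqz : 0 ≤ qfun z := by unfold qfun; positivity
      simp only [hu] at h1
      nlinarith
  by_contra hpos
  push_neg at hpos
  have hδ : 0 < h z / (R ^ 2 + 1) := div_pos hpos (by positivity)
  have := key _ hδ
  rw [div_mul_eq_mul_div] at this
  have hlt : h z * R ^ 2 / (R ^ 2 + 1) < h z := by
    rw [div_lt_iff₀ (by positivity)]
    nlinarith
  linarith

/-- A function is harmonic on a set `s ⊆ ℂ` if it is `C²` there and its Laplacian
(the sum of the second directional derivatives in the directions `1` and `I`) vanishes. -/
def HarmonicOnSet (f : ℂ → ℝ) (s : Set ℂ) : Prop :=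
  ContDiffOn ℝ 2 f s ∧
  ∀ z ∈ s,
    fderiv ℝ (fun y => fderiv ℝ f y 1) z 1 +
      fderiv ℝ (fun y => fderiv ℝ f y Complex.I) z Complex.I = 0

/-- `g : ℂ → ℝ` is a Green's function of `Ω` with pole at `w`, extended by zero. -/
def IsGreensFunction (Ω : Set ℂ) (w : ℂ) (g : ℂ → ℝ) : Prop :=
  ContinuousOn g {w}ᶜ ∧
  (∀ z, z ∉ Ω → g z = 0) ∧
  HarmonicOnSet g (Ω \ {w}) ∧
  ∃ C : ℝ, ∃ r > (0 : ℝ), ∀ z ∈ Metric.ball w r \ {w},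
    |g z + Real.log ‖z - w‖| ≤ C

noncomputable def Nc (c : ℂ) : ℂ → ℝ := fun z => qfun (z - c)

lemma Nc_pos {c z : ℂ} (hz : z ≠ c) : 0 < Nc c z := by
  have : z - c ≠ 0 := sub_ne_zero.2 hz
  have h1 : (z - c).re ≠ 0 ∨ (z - c).im ≠ 0 := by
    by_contra hcon
    push_neg at hcon
    exact this (Complex.ext hcon.1 hcon.2)
  unfold Nc qfun
  rcases h1 with h | h
  · have : 0 < (z - c).re ^ 2 := by positivity
    nlinarith [sq_nonneg (z - c).im]
  · have : 0 < (z - c).im ^ 2 := by positivity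
    nlinarith [sq_nonneg (z - c).re]

lemma Nc_hasFDerivAt (c z : ℂ) :
    HasFDerivAt (Nc c) ((2 * (z - c).re) • Complex.reCLM + (2 * (z - c).im) • Complex.imCLM) z := by
  have hsc : HasFDerivAt (fun z : ℂ => z - c) (ContinuousLinearMap.id ℝ ℂ) z :=
    (hasFDerivAt_id z).sub_const c
  have := (qfun_hasFDerivAt (z - c)).comp z hsc
  simpa using (show HasFDerivAt (Nc c) _ z from this)

lemma logabs_eq (c : ℂ) (z : ℂ) :
    Real.log (‖z - c‖) = Real.log (Nc c z) / 2 := by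
  rw [Complex.norm_def, Real.log_sqrt (Complex.normSq_nonneg _)]
  congr 1
  unfold Nc qfun
  rw [Complex.normSq_apply]; ring

lemma logabs_fderiv {c z : ℂ} (hz : z ≠ c) (v : ℂ) :
    fderiv ℝ (fun y => Real.log (‖y - c‖)) z v =
      ((z - c).re * v.re + (z - c).im * v.im) * (Nc c z)⁻¹ := by
  have hN := Nc_pos hz
  have hlog : HasFDerivAt (fun y => Real.log (Nc c y))
      ((Nc c z)⁻¹ • ((2 * (z - c).re) • Complex.reCLM + (2 * (z - c).im) • Complex.imCLM)) z :=
    (Real.hasDerivAt_log (ne_of_gt hN)).comp_hasFDerivAt z (Nc_hasFDerivAt c z)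
  have hF : HasFDerivAt (fun y => Real.log (‖y - c‖))
      ((1/2 : ℝ) • ((Nc c z)⁻¹ • ((2 * (z - c).re) • Complex.reCLM + (2 * (z - c).im) • Complex.imCLM))) z := by
    have e : (fun y => Real.log (‖y - c‖))
        = fun y => (1/2 : ℝ) * Real.log (Nc c y) := by
      funext y; rw [logabs_eq]; ring
    rw [e]
    have := hlog.const_mul (1/2 : ℝ)
    simpa [smul_smul] using this
  rw [hF.fderiv]
  simp only [ContinuousLinearMap.smul_apply, ContinuousLinearMap.add_apply,
    ContinuousLinearMap.smul_apply, Complex.reCLM_apply, Complex.imCLM_apply,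
    smul_eq_mul]
  field_simp

lemma Num_hasFDerivAt (c v z : ℂ) :
    HasFDerivAt (fun y : ℂ => (y - c).re * v.re + (y - c).im * v.im)
      (v.re • Complex.reCLM + v.im • Complex.imCLM) z := by
  have h1 : HasFDerivAt (fun y : ℂ => (y - c).re * v.re) (v.re • Complex.reCLM) z := by
    have e : (fun y : ℂ => (y - c).re * v.re) = fun y : ℂ => (Complex.reCLM y - c.re) * v.re := by
      funext y; simp [Complex.sub_re]
    rw [e]
    have := ((Complex.reCLM.hasFDerivAt (x := z)).sub_const c.re).mul_const v.re
    simpa using this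
  have h2 : HasFDerivAt (fun y : ℂ => (y - c).im * v.im) (v.im • Complex.imCLM) z := by
    have e : (fun y : ℂ => (y - c).im * v.im) = fun y : ℂ => (Complex.imCLM y - c.im) * v.im := by
      funext y; simp [Complex.sub_im]
    rw [e]
    have := ((Complex.imCLM.hasFDerivAt (x := z)).sub_const c.im).mul_const v.im
    simpa using this
  exact h1.add h2

lemma Pv_fderiv {c z : ℂ} (hz : z ≠ c) (v : ℂ) :
    fderiv ℝ (fun y => ((y - c).re * v.re + (y - c).im * v.im) * (Nc c y)⁻¹) z v
      = (v.re ^ 2 + v.im ^ 2) * (Nc c z)⁻¹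
        - 2 * ((z - c).re * v.re + (z - c).im * v.im) ^ 2 * ((Nc c z) ^ 2)⁻¹ := by
  have hN := Nc_pos hz
  have hInv : HasFDerivAt (fun y => (Nc c y)⁻¹)
      ((-((Nc c z) ^ 2)⁻¹) • ((2 * (z - c).re) • Complex.reCLM + (2 * (z - c).im) • Complex.imCLM)) z :=
    (hasDerivAt_inv (ne_of_gt hN)).comp_hasFDerivAt z (Nc_hasFDerivAt c z)
  have hprod := (Num_hasFDerivAt c v z).mul hInv
  rw [(show HasFDerivAt (fun y => ((y - c).re * v.re + (y - c).im * v.im) * (Nc c y)⁻¹) _ z from hprod).fderiv]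
  simp only [ContinuousLinearMap.add_apply, ContinuousLinearMap.smul_apply,
    Complex.reCLM_apply, Complex.imCLM_apply, smul_eq_mul]
  field_simp
  ring

lemma harmonic_logabs (c : ℂ) :
    HarmonicOnSet (fun z => Real.log (‖z - c‖)) {c}ᶜ := by
  constructor
  · have e : Set.EqOn (fun z => Real.log (‖z - c‖))
        (fun z => Real.log (Nc c z) / 2) {c}ᶜ := fun z _ => logabs_eq c z
    apply ContDiffOn.congr _ e
    intro z hz
    have hz' : z ≠ c := hz
    have hNc : ContDiffAt ℝ 2 (Nc c) z := by
      have : ContDiff ℝ 2 (Nc c) := qfun_contDiff.comp (contDiff_id.sub contDiff_const)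
      exact this.contDiffAt
    have : ContDiffAt ℝ 2 (fun z => Real.log (Nc c z)) z :=
      (Real.contDiffAt_log.2 (ne_of_gt (Nc_pos hz'))).comp z hNc
    exact (this.div_const 2).contDiffWithinAt
  · intro z hz
    have hz' : z ≠ c := hz
    have hopen : IsOpen ({c}ᶜ : Set ℂ) := isOpen_compl_singleton
    have key : ∀ v : ℂ, fderiv ℝ (fun y => fderiv ℝ (fun w => Real.log (‖w - c‖)) y v) z v
        = (v.re ^ 2 + v.im ^ 2) * (Nc c z)⁻¹
          - 2 * ((z - c).re * v.re + (z - c).im * v.im) ^ 2 * ((Nc c z) ^ 2)⁻¹ := by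
      intro v
      have e1 : (fun y => fderiv ℝ (fun w => Real.log (‖w - c‖)) y v)
          =ᶠ[nhds z] (fun y => ((y - c).re * v.re + (y - c).im * v.im) * (Nc c y)⁻¹) := by
        filter_upwards [hopen.mem_nhds hz] with y hy
        exact logabs_fderiv hy v
      rw [e1.fderiv_eq]
      exact Pv_fderiv hz' v
    rw [key 1, key Complex.I]
    have hN := Nc_pos hz'
    simp only [Complex.one_re, Complex.one_im, Complex.I_re, Complex.I_im]
    generalize hA : (z - c).re = A at *
    generalize hB : (z - c).im = B at *
    generalize hNN : Nc c z = N at *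
    have hNeq : N = A ^ 2 + B ^ 2 := by
      rw [← hNN, ← hA, ← hB]; rfl
    have hNne : N ≠ 0 := ne_of_gt hN
    field_simp
    rw [hNeq]
    ring

lemma HarmonicOnSet.mono {f : ℂ → ℝ} {s t : Set ℂ} (hf : HarmonicOnSet f s) (hts : t ⊆ s) :
    HarmonicOnSet f t :=
  ⟨hf.1.mono hts, fun z hz => hf.2 z (hts hz)⟩

lemma HarmonicOnSet.const_mul {f : ℂ → ℝ} {s : Set ℂ} (hs : IsOpen s)
    (hf : HarmonicOnSet f s) (a : ℝ) : HarmonicOnSet (fun z => a * f z) s := by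
  refine ⟨contDiffOn_const.mul hf.1, fun z hz => ?_⟩
  have key : ∀ v : ℂ, fderiv ℝ (fun y => fderiv ℝ (fun w => a * f w) y v) z v
      = a * fderiv ℝ (fun y => fderiv ℝ f y v) z v := by
    intro v
    have e1 : (fun y => fderiv ℝ (fun w => a * f w) y v)
        =ᶠ[nhds z] (fun y => a * fderiv ℝ f y v) := by
      filter_upwards [hs.mem_nhds hz] with y hy
      have d1 : DifferentiableAt ℝ f y :=
        (hf.1.contDiffAt (hs.mem_nhds hy)).differentiableAt (by norm_num)
      rw [fderiv_const_mul d1 a]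
      simp
    rw [e1.fderiv_eq, fderiv_const_mul (fderiv_apply_differentiableAt hs hf.1 hz v) a]
    simp
  rw [key 1, key Complex.I, ← mul_add, hf.2 z hz, mul_zero]

lemma HarmonicOnSet.add {f g : ℂ → ℝ} {s : Set ℂ} (hs : IsOpen s)
    (hf : HarmonicOnSet f s) (hg : HarmonicOnSet g s) :
    HarmonicOnSet (fun z => f z + g z) s := by
  refine ⟨hf.1.add hg.1, fun z hz => ?_⟩
  have key : ∀ v : ℂ, fderiv ℝ (fun y => fderiv ℝ (fun w => f w + g w) y v) z v
      = fderiv ℝ (fun y => fderiv ℝ f y v) z v + fderiv ℝ (fun y => fderiv ℝ g y v) z v := by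
    intro v
    have e1 : (fun y => fderiv ℝ (fun w => f w + g w) y v)
        =ᶠ[nhds z] (fun y => fderiv ℝ f y v + fderiv ℝ g y v) := by
      filter_upwards [hs.mem_nhds hz] with y hy
      have d1 : DifferentiableAt ℝ f y :=
        (hf.1.contDiffAt (hs.mem_nhds hy)).differentiableAt (by norm_num)
      have d2 : DifferentiableAt ℝ g y :=
        (hg.1.contDiffAt (hs.mem_nhds hy)).differentiableAt (by norm_num)
      rw [fderiv_fun_add d1 d2]
      simp
    rw [e1.fderiv_eq, fderiv_fun_add (fderiv_apply_differentiableAt hs hf.1 hz v)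
      (fderiv_apply_differentiableAt hs hg.1 hz v)]
    simp
  rw [key 1, key Complex.I]
  have h1 := hf.2 z hz
  have h2 := hg.2 z hz
  linarith

lemma HarmonicOnSet.add_const {f : ℂ → ℝ} {s : Set ℂ} (hf : HarmonicOnSet f s) (k : ℝ) :
    HarmonicOnSet (fun z => f z + k) s := by
  refine ⟨hf.1.add contDiffOn_const, fun z hz => ?_⟩
  have e : ∀ v : ℂ, (fun y => fderiv ℝ (fun w => f w + k) y v) = fun y => fderiv ℝ f y v := by
    intro v; funext y; rw [fderiv_add_const]
  rw [e 1, e Complex.I]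
  exact hf.2 z hz

lemma HarmonicOnSet.sub {f g : ℂ → ℝ} {s : Set ℂ} (hs : IsOpen s)
    (hf : HarmonicOnSet f s) (hg : HarmonicOnSet g s) :
    HarmonicOnSet (fun z => f z - g z) s := by
  have e : (fun z => f z - g z) = fun z => f z + (-1) * g z := by funext z; ring
  rw [e]
  exact hf.add hs (hg.const_mul hs (-1))

lemma cabs_sub_lower (a b : ℂ) : ‖a‖ - ‖b‖ ≤ ‖a - b‖ := by
  simpa using norm_sub_norm_le a b

lemma cabs_sub_upper (a b : ℂ) : ‖a - b‖ ≤ ‖a‖ + ‖b‖ := by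
  simpa using norm_sub_le a b

set_option maxHeartbeats 2000000 in
/-- The punctured unit disk `𝔻 \ {0}` has no Green's function with pole at `1/2`
(extended by zero): it is not a regular domain. -/
theorem no_green_function_punctured_disk :
    ¬ ∃ g : ℂ → ℝ, IsGreensFunction (ball (0 : ℂ) 1 \ {0}) (1 / 2) g := by
  rintro ⟨g, hcont, hzero, hharm, C₀, r₀, hr₀, hpole⟩
  set Ω : Set ℂ := ball (0 : ℂ) 1 \ {0} with hΩ
  -- g 0 = 0
  have hg0 : g 0 = 0 := hzero 0 (by simp [hΩ])
  -- continuity at 0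
  have hct : ContinuousAt g 0 := by
    apply hcont.continuousAt
    apply isOpen_compl_singleton.mem_nhds
    simp only [Set.mem_compl_iff, Set.mem_singleton_iff]
    intro hcon
    have : (0:ℂ).re = (1/2 : ℂ).re := by rw [hcon]
    norm_num at this
  set κ : ℝ := 1/20 with hκ
  obtain ⟨δ, hδpos, hδ⟩ := Metric.continuousAt_iff.1 hct κ (by norm_num)
  -- normalize the pole constant
  set C : ℝ := max C₀ 0 with hC
  have hC0 : 0 ≤ C := le_max_right _ _
  have hpole' : ∀ z ∈ Metric.ball (1/2 : ℂ) r₀ \ {(1/2 : ℂ)},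
      -Real.log (‖z - 1/2‖) - C ≤ g z := by
    intro z hz
    have := hpole z hz
    have h1 : |g z + Real.log (‖z - 1/2‖)| ≤ C :=
      le_trans (by exact_mod_cast this) (le_max_left _ _)
    have := abs_le.1 h1
    linarith [this.1]
  -- choose radii / points
  set r : ℝ := min (min (r₀/2) (1/8)) (Real.exp (-(2*C + 2))) with hrdef
  have hrpos : 0 < r := lt_min (lt_min (by linarith) (by norm_num)) (Real.exp_pos _)
  have hr18 : r ≤ 1/8 := le_trans (min_le_left _ _) (min_le_right _ _)
  have hrr₀ : r < r₀ := lt_of_le_of_lt (le_trans (min_le_left _ _) (min_le_left _ _)) (by linarith)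
  have hrlog : Real.log r ≤ -(2*C + 2) := by
    rw [Real.log_le_iff_le_exp hrpos]
    exact min_le_right _ _
  set t : ℝ := min (δ/2) (1/8) with htdef
  have htpos : 0 < t := lt_min (by linarith) (by norm_num)
  have ht18 : t ≤ 1/8 := min_le_right _ _
  have htδ : t < δ := lt_of_le_of_lt (min_le_left _ _) (by linarith)
  have ht1 : t ≤ 1 := by linarith
  set ε : ℝ := min (t/2) (Real.exp (-((2 + κ) * Real.log (1/t) / κ))) with hεdef
  have hεpos : 0 < ε := lt_min (by linarith) (Real.exp_pos _)
  have hεt : ε < t := lt_of_le_of_lt (min_le_left _ _) (by linarith)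
  have hεδ : ε < δ := lt_trans hεt htδ
  have hε18 : ε ≤ 1/8 := by
    have := min_le_left (t/2) (Real.exp (-((2 + κ) * Real.log (1/t) / κ)))
    simp only [← hεdef] at this
    linarith
  have hεlog : Real.log ε ≤ -((2 + κ) * Real.log (1/t) / κ) := by
    rw [Real.log_le_iff_le_exp hεpos]
    exact min_le_right _ _
  have hlogε : 0 < Real.log (1/ε) := Real.log_pos (by rw [lt_div_iff₀ hεpos]; linarith)
  have hlogεeq : Real.log (1/ε) = -Real.log ε := by
    rw [one_div, Real.log_inv]
  set b : ℝ := (2 + κ) / Real.log (1/ε) with hbdef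
  have hbpos : 0 < b := div_pos (by norm_num [hκ]) hlogε
  have hκval : κ = 1/20 := hκ
  clear_value b ε t r C κ
  -- the comparison function
  set v : ℂ → ℝ := fun z => ((1/2) * Real.log (‖z - 2‖) +
      (-(1/2)) * Real.log (‖z - 1/2‖) +
      b * Real.log (‖z - 0‖)) + (-((1/2) * Real.log 2)) with hvdef
  -- the domain
  set D : Set ℂ := (ball (0:ℂ) 1 ∩ (closedBall (0:ℂ) ε)ᶜ) ∩ (closedBall (1/2 : ℂ) r)ᶜ with hDdef
  have hDopen : IsOpen D :=
    ((isOpen_ball.inter Metric.isClosed_closedBall.isOpen_compl).inter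
      Metric.isClosed_closedBall.isOpen_compl)
  have hDbdd : Bornology.IsBounded D :=
    (isBounded_ball).subset (fun z hz => hz.1.1)
  have hDsub : D ⊆ Ω \ {(1/2 : ℂ)} := by
    intro z hz
    obtain ⟨⟨hz1, hz2⟩, hz3⟩ := hz
    refine ⟨⟨hz1, ?_⟩, ?_⟩
    · simp only [Set.mem_singleton_iff]
      intro h0
      exact hz2 (by simp [h0, mem_closedBall, hεpos.le])
    · simp only [Set.mem_singleton_iff]
      intro h0
      exact hz3 (by simp [h0, mem_closedBall, hrpos.le])
  have hclosD : closure D ⊆ closedBall (0:ℂ) 1 ∩ {w : ℂ | ε ≤ dist w 0} ∩ {w : ℂ | r ≤ dist w (1/2)} := by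
    apply closure_minimal _ (((Metric.isClosed_closedBall.inter
      (isClosed_le continuous_const (continuous_id.dist continuous_const))).inter
      (isClosed_le continuous_const (continuous_id.dist continuous_const))))
    rintro z ⟨⟨hz1, hz2⟩, hz3⟩
    refine ⟨⟨ball_subset_closedBall hz1, ?_⟩, ?_⟩
    · simp only [Set.mem_setOf_eq]
      by_contra hcon
      push_neg at hcon
      exact hz2 (mem_closedBall.2 hcon.le)
    · simp only [Set.mem_setOf_eq]
      by_contra hcon
      push_neg at hcon
      exact hz3 (mem_closedBall.2 hcon.le)
  -- closure D is inside the good sets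
  have hcl0 : closure D ⊆ {(0:ℂ)}ᶜ := by
    intro z hz
    have := (hclosD hz).1.2
    simp only [Set.mem_setOf_eq] at this
    simp only [Set.mem_compl_iff, Set.mem_singleton_iff]
    intro h0
    rw [h0] at this
    simp at this
    linarith
  have hclhalf : closure D ⊆ {(1/2:ℂ)}ᶜ := by
    intro z hz
    have := (hclosD hz).2
    simp only [Set.mem_setOf_eq] at this
    simp only [Set.mem_compl_iff, Set.mem_singleton_iff]
    intro h0
    rw [h0] at this
    simp at this
    linarith
  have hcl2 : closure D ⊆ {(2:ℂ)}ᶜ := by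
    intro z hz
    have := (hclosD hz).1.1
    simp only [Set.mem_compl_iff, Set.mem_singleton_iff]
    intro h0
    rw [h0] at this
    rw [mem_closedBall] at this
    simp only [dist_zero_right] at this
    norm_num at this
  -- v is harmonic on D
  have hDsub0 : D ⊆ {(0:ℂ)}ᶜ := fun z hz => hcl0 (subset_closure hz)
  have hDsubhalf : D ⊆ {(1/2:ℂ)}ᶜ := fun z hz => hclhalf (subset_closure hz)
  have hDsub2 : D ⊆ {(2:ℂ)}ᶜ := fun z hz => hcl2 (subset_closure hz)
  have hvharm : HarmonicOnSet v D := by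
    have h2 := ((harmonic_logabs 2).mono hDsub2).const_mul hDopen (1/2)
    have hhalf := ((harmonic_logabs (1/2)).mono hDsubhalf).const_mul hDopen (-(1/2))
    have h0 := ((harmonic_logabs 0).mono hDsub0).const_mul hDopen b
    exact (((h2.add hDopen hhalf).add hDopen h0)).add_const (-((1/2) * Real.log 2))
  have hgharm : HarmonicOnSet g D := hharm.mono hDsub
  have hh : HarmonicOnSet (fun z => v z - g z) D := hvharm.sub hDopen hgharm
  -- continuity on closure
  have hvcont : ContinuousOn v (closure D) := by
    have c2 : ContinuousOn (fun z : ℂ => Real.log (‖z - 2‖)) (closure D) :=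
      ((harmonic_logabs 2).1.continuousOn).mono hcl2
    have chalf : ContinuousOn (fun z : ℂ => Real.log (‖z - 1/2‖)) (closure D) :=
      ((harmonic_logabs (1/2)).1.continuousOn).mono hclhalf
    have c0 : ContinuousOn (fun z : ℂ => Real.log (‖z - 0‖)) (closure D) :=
      ((harmonic_logabs 0).1.continuousOn).mono hcl0
    exact (((c2.const_smul (1/2 : ℝ)).add (chalf.const_smul (-(1/2) : ℝ))).add
      (c0.const_smul b)).add continuousOn_const
  have hhcont : ContinuousOn (fun z => v z - g z) (closure D) :=
    hvcont.sub (hcont.mono hclhalf)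
  -- frontier bound
  have hexp2 : (3:ℝ) ≤ Real.exp 2 := by
    have := Real.add_one_le_exp (2:ℝ)
    linarith
  have hfrsub : frontier D ⊆ (sphere (0:ℂ) 1 ∪ sphere (0:ℂ) ε) ∪ sphere (1/2:ℂ) r := by
    intro z hz
    have h1 := frontier_inter_subset (ball (0:ℂ) 1 ∩ (closedBall (0:ℂ) ε)ᶜ)
      ((closedBall (1/2:ℂ) r)ᶜ) hz
    rcases h1 with h | h
    · left
      rcases frontier_inter_subset (ball (0:ℂ) 1) ((closedBall (0:ℂ) ε)ᶜ) h.1 with h' | h'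
      · left
        have := h'.1
        rwa [frontier_ball _ (one_ne_zero)] at this
      · right
        have := h'.2
        rwa [frontier_compl, frontier_closedBall _ (ne_of_gt hεpos)] at this
    · right
      have := h.2
      rwa [frontier_compl, frontier_closedBall _ (ne_of_gt hrpos)] at this
  have hfrontier : ∀ z ∈ frontier D, v z - g z ≤ 0 := by
    intro z hz
    rcases hfrsub hz with (hz1 | hz2) | hz3
    · -- unit circle : v z = 0 = g z
      have habs : ‖z‖ = 1 := by
        have := mem_sphere_iff_norm.1 hz1
        simpa using this
      have hgz : g z = 0 := by
        apply hzero
        intro hmem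
        have := mem_ball_iff_norm.1 hmem.1
        simp only [sub_zero, habs] at this
        linarith
      have hzz : z * (starRingEnd ℂ) z = 1 := by
        rw [Complex.mul_conj]
        norm_cast
        rw [Complex.normSq_eq_norm_sq, habs]
        norm_num
      have e : z - 2 = z * (1 - 2 * (starRingEnd ℂ) z) := by
        linear_combination (2:ℂ) * hzz
      have habs2 : ‖z - 2‖ = 2 * ‖z - 1/2‖ := by
        rw [e, norm_mul, habs, one_mul]
        have e2 : (1 - 2 * (starRingEnd ℂ) z) = (starRingEnd ℂ) (1 - 2 * z) := by
          rw [map_sub, map_mul, map_one, map_ofNat]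
        rw [e2, Complex.norm_conj]
        have e3 : (1 - 2 * z) = -(2 * (z - 1/2)) := by ring
        rw [e3, norm_neg, norm_mul, Complex.norm_two]
      have hz12 : z - 1/2 ≠ 0 := by
        intro hcon
        have : z = 1/2 := by linear_combination hcon
        rw [this] at habs
        simp at habs
      have hlogeq : Real.log (‖z - 2‖)
          = Real.log 2 + Real.log (‖z - 1/2‖) := by
        rw [habs2, Real.log_mul two_ne_zero (norm_ne_zero_iff.mpr hz12)]
      have hlog0 : Real.log (‖z - 0‖) = 0 := by
        rw [sub_zero, habs, Real.log_one]
      have hvz : v z - g z = 0 := by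
        simp only [hvdef]
        rw [hlogeq, hlog0, hgz]
        ring
      linarith
    · -- small circle around 0
      have habs : ‖z‖ = ε := by
        have := mem_sphere_iff_norm.1 hz2
        simpa using this
      have hgz : -κ < g z := by
        have hd : dist z 0 < δ := by
          rw [mem_sphere] at hz2
          rw [hz2]; exact hεδ
        have := hδ hd
        rw [Real.dist_eq, hg0, sub_zero] at this
        have := abs_lt.1 this
        linarith [this.1]
      have hn2 : (3/8 : ℝ) ≤ ‖z - 1/2‖ := by
        have h1 : ‖(1:ℂ)/2‖ - ‖z‖ ≤ ‖(1:ℂ)/2 - z‖ :=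
          cabs_sub_lower _ _
        have h2 : ‖(1:ℂ)/2 - z‖ = ‖z - 1/2‖ := by
          rw [← norm_neg]; congr 1; ring
        have h3 : ‖(1:ℂ)/2‖ = 1/2 := by norm_num [Complex.norm_def, Complex.normSq_apply]
        rw [h2, h3] at h1
        rw [habs] at h1
        linarith
      have hup2 : ‖z - 2‖ ≤ 3 := by
        have h1 : ‖z - 2‖ ≤ ‖z‖ + ‖(2:ℂ)‖ :=
          cabs_sub_upper z 2
        have h2 : ‖(2:ℂ)‖ = 2 := by norm_num [Complex.norm_def, Complex.normSq_apply]
        rw [habs, h2] at h1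
        linarith
      have hb1 : Real.log (‖z - 2‖) ≤ 2 := by
        rw [Real.log_le_iff_le_exp]
        · linarith
        · have : (3/8:ℝ) ≤ 2 - ε := by linarith
          have h1 : ‖(2:ℂ)‖ - ‖z‖ ≤ ‖2 - z‖ :=
            cabs_sub_lower 2 z
          have h2 : ‖(2:ℂ) - z‖ = ‖z - 2‖ := by
            rw [← norm_neg]; congr 1; ring
          have h3 : ‖(2:ℂ)‖ = 2 := by norm_num [Complex.norm_def, Complex.normSq_apply]
          rw [h2, h3, habs] at h1
          linarith
      have hb2 : -2 ≤ Real.log (‖z - 1/2‖) := by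
        rw [Real.le_log_iff_exp_le (by linarith)]
        have : Real.exp (-2) ≤ 3/8 := by
          rw [Real.exp_neg]
          rw [inv_le_comm₀ (Real.exp_pos 2) (by norm_num)]
          linarith
        linarith
      have hb3 : b * Real.log (‖z - 0‖) = -(2 + κ) := by
        rw [sub_zero, habs, hbdef]
        rw [show Real.log ε = -Real.log (1/ε) by rw [hlogεeq]; ring]
        field_simp
      have hlog2 : (0:ℝ) ≤ Real.log 2 := Real.log_nonneg one_le_two
      simp only [hvdef]
      rw [hb3]
      linarith [hb1, hb2, hgz, hlog2]
    · -- circle around the pole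
      have habs : ‖z - 1/2‖ = r := by
        rw [mem_sphere, Complex.dist_eq] at hz3
        exact hz3
      have hzne : z ≠ 1/2 := by
        intro hcon
        rw [hcon] at habs
        simp at habs
        linarith
      have hgz : -Real.log r - C ≤ g z := by
        have := hpole' z ⟨mem_ball.2 (by rw [Complex.dist_eq, habs]; exact hrr₀), by
          simpa using hzne⟩
        rwa [habs] at this
      have hnz_up : ‖z‖ ≤ 1/2 + r := by
        have h1 : ‖z‖ = ‖(z - 1/2) + 1/2‖ := by congr 1; ring
        rw [h1]
        have := norm_add_le (z - 1/2) (1/2)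
        have h3 : ‖(1:ℂ)/2‖ = 1/2 := by norm_num [Complex.norm_def, Complex.normSq_apply]
        rw [habs, h3] at this
        linarith
      have hnz_lo : 3/8 ≤ ‖z‖ := by
        have h1 : ‖(1:ℂ)/2‖ - ‖1/2 - z‖ ≤ ‖z‖ := by
          have h0 := cabs_sub_lower ((1:ℂ)/2) (1/2 - z)
          have e : (1:ℂ)/2 - (1/2 - z) = z := by ring
          rw [e] at h0
          linarith
        have h2 : ‖(1:ℂ)/2 - z‖ = r := by
          rw [← norm_neg]
          rw [show -((1:ℂ)/2 - z) = z - 1/2 by ring, habs]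
        have h3 : ‖(1:ℂ)/2‖ = 1/2 := by norm_num [Complex.norm_def, Complex.normSq_apply]
        rw [h2, h3] at h1
        linarith
      have hb1 : Real.log (‖z - 2‖) ≤ 2 := by
        rw [Real.log_le_iff_le_exp]
        · have h1 : ‖z - 2‖ ≤ ‖z‖ + ‖(2:ℂ)‖ :=
            cabs_sub_upper z 2
          have h3 : ‖(2:ℂ)‖ = 2 := by norm_num [Complex.norm_def, Complex.normSq_apply]
          rw [h3] at h1
          linarith
        · have h1 : ‖(2:ℂ)‖ - ‖z‖ ≤ ‖2 - z‖ :=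
            cabs_sub_lower 2 z
          have h2 : ‖(2:ℂ) - z‖ = ‖z - 2‖ := by
            rw [← norm_neg]; congr 1; ring
          have h3 : ‖(2:ℂ)‖ = 2 := by norm_num [Complex.norm_def, Complex.normSq_apply]
          rw [h2, h3] at h1
          linarith
      have hb3 : b * Real.log (‖z - 0‖) ≤ 0 := by
        apply mul_nonpos_of_nonneg_of_nonpos hbpos.le
        rw [sub_zero]
        apply Real.log_nonpos (norm_nonneg z)
        linarith
      have hlog2 : (0:ℝ) ≤ Real.log 2 := Real.log_nonneg one_le_two
      simp only [hvdef]
      rw [habs]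
      linarith
  -- max principle
  have hmaxp := max_principle hDopen hDbdd hh.1 hh.2 hhcont hfrontier
  -- evaluate at x = -t
  have hxabs : ‖-(t:ℂ)‖ = t := by
    rw [norm_neg, Complex.norm_real, Real.norm_eq_abs, abs_of_pos htpos]
  have hxabs2 : ‖-(t:ℂ) - 2‖ = t + 2 := by
    have e : -(t:ℂ) - 2 = ((-(t + 2) : ℝ) : ℂ) := by push_cast; ring
    rw [e, Complex.norm_real, Real.norm_eq_abs, abs_of_neg (by linarith)]
    ring
  have hxabsh : ‖-(t:ℂ) - 1/2‖ = t + 1/2 := by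
    have e : -(t:ℂ) - 1/2 = ((-(t + 1/2) : ℝ) : ℂ) := by push_cast; ring
    rw [e, Complex.norm_real, Real.norm_eq_abs, abs_of_neg (by linarith)]
    ring
  have hxabs0 : ‖-(t:ℂ) - 0‖ = t := by rw [sub_zero, hxabs]
  have hxD : -(t:ℂ) ∈ D := by
    rw [hDdef]
    refine ⟨⟨?_, ?_⟩, ?_⟩
    · rw [mem_ball, Complex.dist_eq, sub_zero, hxabs]
      linarith
    · simp only [Set.mem_compl_iff, mem_closedBall, Complex.dist_eq, sub_zero, hxabs]
      push_neg
      linarith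
    · simp only [Set.mem_compl_iff, mem_closedBall, Complex.dist_eq, hxabsh]
      push_neg
      linarith
  have hvg : v (-(t:ℂ)) - g (-(t:ℂ)) ≤ 0 := hmaxp _ hxD
  have hgx : g (-(t:ℂ)) < κ := by
    have hd : dist (-(t:ℂ)) 0 < δ := by
      rw [Complex.dist_eq, sub_zero, hxabs]
      exact htδ
    have := hδ hd
    rw [Real.dist_eq, hg0, sub_zero] at this
    exact lt_of_le_of_lt (le_abs_self _) this
  -- lower bounds for v at -t
  have hterm1 : Real.log 2 ≤ Real.log (t + 2) := by
    rw [Real.log_le_log_iff (by norm_num) (by linarith)]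
    linarith
  have hterm2 : Real.log (t + 1/2) ≤ -(3/8) := by
    have := Real.log_le_sub_one_of_pos (show (0:ℝ) < t + 1/2 by linarith)
    linarith
  have hterm3 : -κ ≤ b * Real.log t := by
    have hlog1t : Real.log (1/t) = -Real.log t := by rw [one_div, Real.log_inv]
    have hlog1tpos : 0 ≤ Real.log (1/t) :=
      Real.log_nonneg (by rw [le_div_iff₀ htpos]; linarith)
    have hκpos : (0:ℝ) < κ := by rw [hκval]; norm_num
    have hkey : (2 + κ) * Real.log (1/t) ≤ κ * Real.log (1/ε) := by
      have h1 : (2 + κ) * Real.log (1/t) / κ ≤ Real.log (1/ε) := by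
        rw [hlogεeq]
        linarith [hεlog]
      calc (2 + κ) * Real.log (1/t) = ((2 + κ) * Real.log (1/t) / κ) * κ := by
            field_simp
        _ ≤ Real.log (1/ε) * κ := by
            apply mul_le_mul_of_nonneg_right h1 hκpos.le
        _ = κ * Real.log (1/ε) := by ring
    have hble : b * Real.log (1/t) ≤ κ := by
      rw [hbdef, div_mul_eq_mul_div, div_le_iff₀ hlogε]
      calc (2 + κ) * Real.log (1/t) ≤ κ * Real.log (1/ε) := hkey
        _ = κ * Real.log (1/ε) := rfl
    have : b * Real.log t = -(b * Real.log (1/t)) := by rw [hlog1t]; ring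
    rw [this]
    linarith
  -- contradiction
  have hvx : v (-(t:ℂ)) = 1/2 * Real.log (t + 2) + -(1/2) * Real.log (t + 1/2)
      + b * Real.log t + -(1/2 * Real.log 2) := by
    simp only [hvdef]
    rw [hxabs2, hxabsh, hxabs0]
  rw [hvx] at hvg
  have hκpos : (0:ℝ) < κ := by rw [hκval]; norm_num
  have hfinal : 3/16 - κ ≤ g (-(t:ℂ)) := by linarith
  rw [hκval] at hfinal hgx
  linarith
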